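/- Let $F$ be a properly colored fixed-end-vertex open walk in a loopless edge-colored multigraph $G$ with first vertex $u$ and first edge of color $i$, and last vertex $v \neq u$. Let $G'$ be obtained by duplicating every edge of $F$. Then for every color $j$: $d'(u) - 2 d'_j(u) \ge d(u) - 2 d_j(u) - 1$ if $j = i$, and $d'(u) - 2 d'_j(u) \ge d(u) - 2 d_j(u) + 1$ if $j \ne i$. Moreover, the parity of $d(u)$ changes, i.e., $d'(u) \not\equiv d(u) \pmod 2$. -/

import Mathlib

/-- An edge-colored multigraph: edges indexed by a type `E`, each with an unordered pair
of end-vertices and a color (a natural number). -/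
structure ECM (V : Type) (E : Type) where
  ends : E → Sym2 V
  color : E → ℕ

namespace ECM

/-- A walk from `u` to `v`: a sequence of edges, each consistent with the vertex sequence. -/
inductive Walk {V E : Type} (G : ECM V E) : V → V → Type
  | nil (v : V) : Walk G v v
  | cons {u v w : V} (e : E) (h : G.ends e = s(u, v)) (p : Walk G v w) : Walk G u w

/-- The list of edges of a walk, in order. -/
def Walk.edges {V E : Type} {G : ECM V E} : {u v : V} → G.Walk u v → List E
  | _, _, .nil _ => []
  | _, _, .cons e _ p => e :: p.edges

/-- A fixed-end-vertex walk is properly colored (PC) if consecutive edges have distinct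
colors (no condition between the last and first edges, even if the walk is closed). -/
def Walk.IsPC {V E : Type} {G : ECM V E} {u v : V} (p : G.Walk u v) : Prop :=
  List.Chain' (· ≠ ·) (p.edges.map G.color)

/-- Concatenation of walks. -/
def Walk.append {V E : Type} {G : ECM V E} :
    {u v w : V} → G.Walk u v → G.Walk v w → G.Walk u w
  | _, _, _, .nil _, q => q
  | _, _, _, .cons e h p, q => .cons e h (p.append q)

/-- The degree of a vertex: the number of edges incident with it. -/
noncomputable def deg {V E : Type} (G : ECM V E) (u : V) : ℕ := {e : E | u ∈ G.ends e}.ncard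

/-- The color-`i` degree of a vertex: the number of edges of color `i` incident with it. -/
noncomputable def degC {V E : Type} (G : ECM V E) (u : V) (i : ℕ) : ℕ :=
  {e : E | u ∈ G.ends e ∧ G.color e = i}.ncard

/-- `G` is connected: any two vertices are joined by a walk. -/
def Connected {V E : Type} (G : ECM V E) : Prop := ∀ x y : V, Nonempty (G.Walk x y)

/-- A closed walk is properly colored cyclically: it has at least one edge, consecutive
edges have distinct colors, and the last edge's color differs from the first edge's color. -/
def Walk.IsPCClosed {V E : Type} {G : ECM V E} {u : V} (p : G.Walk u u) : Prop :=
  p.edges ≠ [] ∧ List.Chain' (· ≠ ·) (p.edges.map G.color) ∧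
    ∀ a ∈ (p.edges.map G.color).getLast?, ∀ b ∈ (p.edges.map G.color).head?, a ≠ b

/-- A closed walk is an Euler trail if it traverses every edge exactly once. -/
def Walk.IsEuler {V E : Type} {G : ECM V E} {u : V} (p : G.Walk u u) : Prop :=
  p.edges.Nodup ∧ ∀ e : E, e ∈ p.edges

/-- The multigraph obtained from `G` by duplicating every edge along the walk `p`
(one new parallel copy per traversal). -/
def dup {V E : Type} (G : ECM V E) {a b : V} (p : G.Walk a b) :
    ECM V (E ⊕ Fin p.edges.length) where
  ends := Sum.elim G.ends fun i => G.ends (p.edges.get i)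
  color := Sum.elim G.color fun i => G.color (p.edges.get i)

end ECM

section DupHelpers

attribute [local instance] Classical.propDecidable

lemma ncard_sum_split {α β : Type} [Fintype α] [Fintype β] (P : α ⊕ β → Prop) :
    {x | P x}.ncard = {a | P (Sum.inl a)}.ncard + {b | P (Sum.inr b)}.ncard := by
  rw [← Nat.card_coe_set_eq, ← Nat.card_coe_set_eq, ← Nat.card_coe_set_eq]
  have h1 : Nat.card {x // P x} = Nat.card ({a // P (Sum.inl a)} ⊕ {b // P (Sum.inr b)}) :=
    Nat.card_congr Equiv.subtypeSum
  rw [Nat.card_sum] at h1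
  exact h1

lemma card_filter_get {α : Type} (l : List α) (p : α → Bool) :
    (Finset.univ.filter (fun k : Fin l.length => p (l.get k) = true)).card = l.countP p := by
  induction l with
  | nil => simp
  | cons a t ih =>
    rw [Finset.card_filter]
    show (∑ i : Fin (t.length + 1), if p ((a :: t).get i) = true then 1 else 0) = _
    rw [Fin.sum_univ_succ, List.countP_cons, ← ih, Finset.card_filter]
    simp [add_comm]
    exact if_congr Iff.rfl rfl rfl

lemma ncard_fin_get {α : Type} (l : List α) (p : α → Bool) :
    {k : Fin l.length | p (l.get k)}.ncard = l.countP p := by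
  rw [Set.ncard_eq_toFinset_card', Set.toFinset_setOf, ← card_filter_get]

namespace ECM
variable {V E : Type} (G : ECM V E)

noncomputable def cntW (u : V) (l : List E) : ℕ :=
  l.countP (fun e => decide (u ∈ G.ends e))

noncomputable def cntC (u : V) (j : ℕ) (l : List E) : ℕ :=
  l.countP (fun e => decide (u ∈ G.ends e ∧ G.color e = j))

lemma deg_dup [Fintype E] {a b : V} (p : G.Walk a b) (u : V) :
    (G.dup p).deg u = G.deg u + G.cntW u p.edges := by
  unfold deg dup cntW
  rw [ncard_sum_split (fun x => u ∈ Sum.elim G.ends (fun i => G.ends (p.edges.get i)) x)]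
  simp only [Sum.elim_inl, Sum.elim_inr]
  congr 1
  rw [← ncard_fin_get p.edges (fun e => decide (u ∈ G.ends e))]
  congr 1
  ext k
  simp

lemma degC_dup [Fintype E] {a b : V} (p : G.Walk a b) (u : V) (j : ℕ) :
    (G.dup p).degC u j = G.degC u j + G.cntC u j p.edges := by
  unfold degC dup cntC
  rw [ncard_sum_split
    (fun x => u ∈ Sum.elim G.ends (fun i => G.ends (p.edges.get i)) x ∧
      Sum.elim G.color (fun i => G.color (p.edges.get i)) x = j)]
  simp only [Sum.elim_inl, Sum.elim_inr]
  congr 1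
  rw [← ncard_fin_get p.edges (fun e => decide (u ∈ G.ends e ∧ G.color e = j))]
  congr 1
  ext k
  simp

variable {G}

lemma cntW_cons (u : V) (e : E) (l : List E) :
    G.cntW u (e :: l) = G.cntW u l + (if u ∈ G.ends e then 1 else 0) := by
  simp [cntW, List.countP_cons]

lemma cntC_cons (u : V) (j : ℕ) (e : E) (l : List E) :
    G.cntC u j (e :: l) = G.cntC u j l +
      (if u ∈ G.ends e ∧ G.color e = j then 1 else 0) := by
  simp [cntC, List.countP_cons]

lemma key (hloop : ∀ e : E, ¬ (G.ends e).IsDiag) (u : V) :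
    ∀ {x v : V} (q : G.Walk x v), q.IsPC → v ≠ u →
    ((x ≠ u → G.cntW u q.edges % 2 = 0 ∧ ∀ j, 2 * G.cntC u j q.edges ≤ G.cntW u q.edges) ∧
     (x = u → G.cntW u q.edges % 2 = 1 ∧ ∀ j e₀, q.edges.head? = some e₀ →
        2 * G.cntC u j q.edges ≤ G.cntW u q.edges + 1 ∧
        (G.color e₀ ≠ j → 2 * G.cntC u j q.edges + 1 ≤ G.cntW u q.edges))) := by
  intro x v q
  induction q with
  | nil w =>
    intro _ hv
    refine ⟨fun _ => by simp [cntW, cntC, Walk.edges], fun hxu => absurd hxu hv⟩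
  | cons e h q ih =>
    rename_i a b w
    intro hpc hv
    have hab : a ≠ b := by
      intro hh
      exact hloop e (by rw [h, hh]; exact Sym2.mk_isDiag_iff.mpr rfl)
    have hmem : u ∈ G.ends e ↔ u = a ∨ u = b := by rw [h]; exact Sym2.mem_iff
    rw [Walk.IsPC, Walk.edges, List.map_cons, List.Chain', List.isChain_cons] at hpc
    have ihq := ih hpc.2 hv
    have hedges : (Walk.cons e h q).edges = e :: q.edges := rfl
    constructor
    · -- x = a ≠ u
      intro hau
      by_cases hbu : b = u
      · have hue : u ∈ G.ends e := hmem.mpr (Or.inr hbu.symm)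
        have hne : q.edges ≠ [] := by
          cases q with
          | nil => exact absurd hbu hv
          | cons f hf r => simp [Walk.edges]
        obtain ⟨e₁, t, het⟩ := List.exists_cons_of_ne_nil hne
        have he₁ : q.edges.head? = some e₁ := by rw [het]; rfl
        have ih2 := ihq.2 hbu
        have hcol : G.color e ≠ G.color e₁ := by
          apply hpc.1
          rw [List.head?_map, he₁]; rfl
        have hW := ih2.1
        refine ⟨?_, ?_⟩
        · rw [hedges, cntW_cons, if_pos hue]
          omega
        · intro j
          have hb := ih2.2 j e₁ he₁
          rw [hedges, cntW_cons, cntC_cons, if_pos hue]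
          by_cases hcj : G.color e = j
          · have hb2 := hb.2 (fun hh => hcol (hcj.trans hh.symm))
            rw [if_pos ⟨hue, hcj⟩]
            omega
          · rw [if_neg (fun hh => hcj hh.2)]
            omega
      · have hue : u ∉ G.ends e := by
          rw [hmem]
          rintro (rfl | rfl)
          · exact hau rfl
          · exact hbu rfl
        have ih1 := ihq.1 (fun hh => hbu hh)
        refine ⟨?_, fun j => ?_⟩
        · rw [hedges, cntW_cons, if_neg hue]
          omega
        · have := ih1.2 j
          rw [hedges, cntW_cons, cntC_cons, if_neg hue, if_neg (fun hh => hue hh.1)]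
          omega
    · -- x = a = u
      intro hau
      have hue : u ∈ G.ends e := hmem.mpr (Or.inl hau.symm)
      have hbu : b ≠ u := fun hh => hab (hau.trans hh.symm)
      have ih1 := ihq.1 hbu
      refine ⟨?_, ?_⟩
      · rw [hedges, cntW_cons, if_pos hue]
        omega
      · intro j e₀ he₀
        have he₀e : e₀ = e := by
          rw [hedges, List.head?_cons] at he₀
          exact (Option.some.injEq _ _ ▸ he₀ :).symm
        subst he₀e
        have h2 := ih1.2 j
        rw [hedges, cntW_cons, cntC_cons, if_pos hue]
        by_cases hcj : G.color e₀ = j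
        · rw [if_pos ⟨hue, hcj⟩]
          omega
        · rw [if_neg (fun hh => hcj hh.2)]
          refine ⟨by omega, fun _ => by omega⟩

end ECM

end DupHelpers


/-- Duplicating every edge of a properly colored open fixed-end-vertex walk `p` from `u` to
`v ≠ u` whose first edge has color `i`: for every color `j`, the quantity `d(u) - 2 d_j(u)`
decreases by at most 1 if `j = i` and increases by at least 1 otherwise; moreover the parity
of `d(u)` changes. -/
theorem dup_open_walk_endpoint {V E : Type} [Fintype E] (G : ECM V E)
    (hloop : ∀ e : E, ¬ (G.ends e).IsDiag)
    {u v : V} (huv : u ≠ v) (p : G.Walk u v) (hpc : p.IsPC)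
    {e₀ : E} (hhead : p.edges.head? = some e₀) {i : ℕ} (hi : G.color e₀ = i) :
    (∀ j : ℕ,
      (j = i → (G.deg u : ℤ) - 2 * G.degC u j - 1
        ≤ ((G.dup p).deg u : ℤ) - 2 * (G.dup p).degC u j) ∧
      (j ≠ i → (G.deg u : ℤ) - 2 * G.degC u j + 1
        ≤ ((G.dup p).deg u : ℤ) - 2 * (G.dup p).degC u j)) ∧
    (G.dup p).deg u % 2 ≠ G.deg u % 2 := by
  obtain ⟨hodd, hbnd⟩ := (ECM.key hloop u p hpc huv.symm).2 rfl
  constructor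
  · intro j
    have hb := hbnd j e₀ hhead
    constructor
    · intro hji
      rw [G.deg_dup p u, G.degC_dup p u j]
      have h1 := hb.1
      push_cast
      omega
    · intro hji
      have h2 := hb.2 (by rw [hi]; exact fun hh => hji hh.symm)
      rw [G.deg_dup p u, G.degC_dup p u j]
      push_cast
      omega
  · rw [G.deg_dup p u]
    omega
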